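/- Let 𝐌 : Matrix (Fin k) (Fin k) K and let M : Matrix (Fin k) (Fin k) (WithBot G) be the matrix M i j := val (𝐌 i j). If M is tropically nonsingular with unique optimal permutation σ, then det 𝐌 ≠ 0, val (det 𝐌) = tper M, and the leading coefficient of det 𝐌 has the same sign as Equiv.Perm.sign σ · Π_i (sign of the leading coefficient of 𝐌 i (σ i)). -/

import Mathlib

noncomputable section
open scoped Classical

variable {G : Type*} [AddCommGroup G] [LinearOrder G] [IsOrderedAddMonoid G]

/-- The valuation `val : HahnSeries G ℝ → WithBot G`, with `val 𝐱 = -𝐱.order` for `𝐱 ≠ 0`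
and `val 0 = ⊥`. -/
def hahnVal (x : HahnSeries G ℝ) : WithBot G :=
  if x = 0 then ⊥ else ↑(-x.order)

/-- Tropical permanent of a square matrix over the max-plus semiring `WithBot G`:
`tper M = ⊔_σ Σ_i M i (σ i)`, sums taken in `WithBot G` (`⊥` is absorbing for `+`). -/
def tper {k : ℕ} (M : Matrix (Fin k) (Fin k) (WithBot G)) : WithBot G :=
  Finset.univ.sup (fun σ : Equiv.Perm (Fin k) => ∑ i, M i (σ i))

private lemma real_sign_mul (a b : ℝ) : Real.sign (a * b) = Real.sign a * Real.sign b := by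
  rcases lt_trichotomy a 0 with ha | ha | ha
  · rcases lt_trichotomy b 0 with hb | hb | hb
    · rw [Real.sign_of_pos (mul_pos_of_neg_of_neg ha hb), Real.sign_of_neg ha,
        Real.sign_of_neg hb]; ring
    · subst hb; simp [Real.sign_zero]
    · rw [Real.sign_of_neg (mul_neg_of_neg_of_pos ha hb), Real.sign_of_neg ha,
        Real.sign_of_pos hb]; ring
  · subst ha; simp [Real.sign_zero]
  · rcases lt_trichotomy b 0 with hb | hb | hb
    · rw [Real.sign_of_neg (mul_neg_of_pos_of_neg ha hb), Real.sign_of_pos ha,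
        Real.sign_of_neg hb]; ring
    · subst hb; simp [Real.sign_zero]
    · rw [Real.sign_of_pos (mul_pos ha hb), Real.sign_of_pos ha, Real.sign_of_pos hb]; ring

private lemma real_sign_prod {ι : Type*} (s : Finset ι) (f : ι → ℝ) :
    Real.sign (∏ i ∈ s, f i) = ∏ i ∈ s, Real.sign (f i) := by
  classical
  induction s using Finset.cons_induction with
  | empty => simp [Real.sign_one]
  | cons a s ha ih => rw [Finset.prod_cons, Finset.prod_cons, real_sign_mul, ih]

private lemma hahn_prod_facts {ι : Type*} (s : Finset ι) (f : ι → HahnSeries G ℝ)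
    (hf : ∀ i ∈ s, f i ≠ 0) :
    (∏ i ∈ s, f i) ≠ 0 ∧ (∏ i ∈ s, f i).order = ∑ i ∈ s, (f i).order ∧
      (∏ i ∈ s, f i).leadingCoeff = ∏ i ∈ s, (f i).leadingCoeff := by
  classical
  induction s using Finset.cons_induction with
  | empty =>
    refine ⟨one_ne_zero, ?_, ?_⟩ <;>
      simp [HahnSeries.order_one, HahnSeries.leadingCoeff_one]
  | cons a s ha ih =>
    obtain ⟨h1, h2, h3⟩ := ih (fun i hi => hf i (Finset.mem_cons_of_mem hi))
    have hfa := hf a (Finset.mem_cons_self a s)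
    refine ⟨?_, ?_, ?_⟩
    · rw [Finset.prod_cons]; exact mul_ne_zero hfa h1
    · rw [Finset.prod_cons, HahnSeries.order_mul hfa h1, h2, Finset.sum_cons]
    · rw [Finset.prod_cons, HahnSeries.leadingCoeff_eq, HahnSeries.order_mul hfa h1,
        HahnSeries.coeff_mul_order_add_order, h3, Finset.prod_cons,
        HahnSeries.leadingCoeff_eq]

/-- The coefficient at `a` as an additive monoid hom. -/
private def coeffHom (a : G) : HahnSeries G ℝ →+ ℝ where
  toFun x := x.coeff a
  map_zero' := rfl
  map_add' _ _ := HahnSeries.coeff_add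

/-- Coercion `G → WithBot G` as an additive monoid hom. -/
private def wbHom : G →+ WithBot G where
  toFun := (↑·)
  map_zero' := rfl
  map_add' := WithBot.coe_add

/-- If the matrix `M = val ∘ MK` of valuations is tropically nonsingular
with unique optimal permutation `σ`, then `det MK ≠ 0`, `val (det MK) = tper M`, and the
leading coefficient of `det MK` has the same sign as
`sign σ · Π_i sign (leading coefficient of MK i (σ i))`. -/
theorem det_of_tropically_nonsingular (k : ℕ)
    (MK : Matrix (Fin k) (Fin k) (HahnSeries G ℝ))
    (M : Matrix (Fin k) (Fin k) (WithBot G))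
    (hM : ∀ i j, M i j = hahnVal (MK i j))
    (hbot : tper M ≠ ⊥)
    (σ : Equiv.Perm (Fin k))
    (hσ : ∑ i, M i (σ i) = tper M)
    (huniq : ∀ π : Equiv.Perm (Fin k), ∑ i, M i (π i) = tper M → π = σ) :
    MK.det ≠ 0 ∧
    hahnVal MK.det = tper M ∧
    Real.sign (MK.det.coeff MK.det.order) =
      ((Equiv.Perm.sign σ : ℤ) : ℝ) *
        ∏ i, Real.sign ((MK i (σ i)).coeff (MK i (σ i)).order) := by
  classical
  obtain ⟨g, hg⟩ := WithBot.ne_bot_iff_exists.mp hbot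
  -- all σ-entries are nonzero
  have hσne : ∀ i, MK i (σ i) ≠ 0 := by
    intro i h0
    have hMi : M i (σ i) = ⊥ := by rw [hM, hahnVal, if_pos h0]
    have hsb : ∑ j, M j (σ j) = ⊥ := by
      rw [← Finset.add_sum_erase Finset.univ (fun j => M j (σ j)) (Finset.mem_univ i), hMi,
        WithBot.bot_add]
    exact hbot (hσ ▸ hsb)
  have hMσ : ∀ i, M i (σ i) = ((-(MK i (σ i)).order : G) : WithBot G) := fun i => by
    rw [hM, hahnVal, if_neg (hσne i)]
  have hsumσ : ((∑ i, -(MK i (σ i)).order : G) : WithBot G) = (g : WithBot G) := by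
    have : ∑ i, M i (σ i) = ((∑ i, -(MK i (σ i)).order : G) : WithBot G) := by
      simp_rw [hMσ]
      exact (map_sum wbHom (fun i => -(MK i (σ i)).order) Finset.univ).symm
    rw [← this, hσ, ← hg]
  have hord : ∑ i, (MK i (σ i)).order = -g := by
    have h := WithBot.coe_injective hsumσ
    rw [Finset.sum_neg_distrib] at h
    exact neg_eq_iff_eq_neg.mp h
  obtain ⟨hPσne, hPσord, hPσlc⟩ :=
    hahn_prod_facts (G := G) Finset.univ (fun i => MK i (σ i)) (fun i _ => hσne i)
  rw [hord] at hPσord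
  -- coefficients of the other permutation terms vanish at or below `-g`
  have hother : ∀ π : Equiv.Perm (Fin k), π ≠ σ → ∀ a : G, a ≤ -g →
      (∏ i, MK i (π i)).coeff a = 0 := by
    intro π hπ a ha
    by_cases hz : ∀ i, MK i (π i) ≠ 0
    · obtain ⟨hne, hordp, -⟩ :=
        hahn_prod_facts (G := G) Finset.univ (fun i => MK i (π i)) (fun i _ => hz i)
      have hcoe : ∑ i, M i (π i) = ((∑ i, -(MK i (π i)).order : G) : WithBot G) := by
        have : ∀ i, M i (π i) = ((-(MK i (π i)).order : G) : WithBot G) := fun i => by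
          rw [hM, hahnVal, if_neg (hz i)]
        simp_rw [this]
        exact (map_sum wbHom (fun i => -(MK i (π i)).order) Finset.univ).symm
      have hlt : ((∑ i, -(MK i (π i)).order : G) : WithBot G) < (g : WithBot G) := by
        rw [← hcoe, hg]
        exact lt_of_le_of_ne (Finset.le_sup (f := fun π : Equiv.Perm (Fin k) => ∑ i, M i (π i))
          (Finset.mem_univ π)) fun h => hπ (huniq π h)
      have hlt' : -g < ∑ i, (MK i (π i)).order := by
        have h := WithBot.coe_lt_coe.mp hlt
        rw [Finset.sum_neg_distrib] at h
        exact neg_lt.mp h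
      exact HahnSeries.coeff_eq_zero_of_lt_order (by rw [hordp]; exact lt_of_le_of_lt ha hlt')
    · push_neg at hz
      obtain ⟨i, hi⟩ := hz
      rw [Finset.prod_eq_zero (Finset.mem_univ i) hi, HahnSeries.coeff_zero]
  -- determinant expansion
  have hdet : MK.det = ∑ π : Equiv.Perm (Fin k),
      (Equiv.Perm.sign π : ℤ) • ∏ i, MK i (π i) := by
    rw [← Matrix.det_transpose, Matrix.det_apply']
    refine Finset.sum_congr rfl fun π _ => ?_
    rw [← zsmul_eq_mul]
    simp [Matrix.transpose_apply]
  have hcoeff : ∀ a : G, a ≤ -g →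
      MK.det.coeff a = (Equiv.Perm.sign σ : ℤ) • (∏ i, MK i (σ i)).coeff a := by
    intro a ha
    have h1 : MK.det.coeff a = ∑ π : Equiv.Perm (Fin k),
        (Equiv.Perm.sign π : ℤ) • (∏ i, MK i (π i)).coeff a := by
      have := map_sum (coeffHom a)
        (fun π : Equiv.Perm (Fin k) => (Equiv.Perm.sign π : ℤ) • ∏ i, MK i (π i)) Finset.univ
      rw [hdet]
      refine this.trans (Finset.sum_congr rfl fun π _ => ?_)
      rw [map_zsmul]
      rfl
    rw [h1]
    exact Finset.sum_eq_single σ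
      (fun π _ hπ => by rw [hother π hπ a ha, smul_zero])
      (fun h => absurd (Finset.mem_univ σ) h)
  have hlcne : (∏ i, MK i (σ i)).leadingCoeff ≠ 0 := HahnSeries.leadingCoeff_ne_zero.mpr hPσne
  have hsne : (Equiv.Perm.sign σ : ℤ) • (∏ i, MK i (σ i)).leadingCoeff ≠ 0 := by
    rcases Int.units_eq_one_or (Equiv.Perm.sign σ) with h1 | h1 <;> rw [h1] <;>
      simpa using hlcne
  have hcoeffg : MK.det.coeff (-g) =
      (Equiv.Perm.sign σ : ℤ) • (∏ i, MK i (σ i)).leadingCoeff := by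
    rw [hcoeff (-g) le_rfl, HahnSeries.leadingCoeff_eq, hPσord]
  have hdetcne : MK.det.coeff (-g) ≠ 0 := by rw [hcoeffg]; exact hsne
  have hdetne : MK.det ≠ 0 := fun h => hdetcne (by rw [h, HahnSeries.coeff_zero])
  have hordeq : MK.det.order = -g := by
    refine le_antisymm (HahnSeries.order_le_of_coeff_ne_zero hdetcne) (le_of_not_gt fun hlt => ?_)
    exact HahnSeries.coeff_order_eq_zero.not.mpr hdetne
      (by rw [hcoeff _ (le_of_lt hlt),
        HahnSeries.coeff_eq_zero_of_lt_order (hPσord ▸ hlt), smul_zero])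
  refine ⟨hdetne, ?_, ?_⟩
  · rw [hahnVal, if_neg hdetne, hordeq, neg_neg, hg]
  · have hrhs : ∏ i, Real.sign ((MK i (σ i)).coeff (MK i (σ i)).order) =
        Real.sign ((∏ i, MK i (σ i)).leadingCoeff) := by
      rw [hPσlc, real_sign_prod]
      exact Finset.prod_congr rfl fun i _ => by rw [HahnSeries.leadingCoeff_eq]
    rw [hordeq, hcoeffg, hrhs]
    rcases Int.units_eq_one_or (Equiv.Perm.sign σ) with h1 | h1 <;> rw [h1] <;>
      simp [Real.sign_neg]

end
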